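/- With μ a regular bimultiplication law covering a coupling and h a hindrance (ε∘h = R^μ), the trilinear map f(a1⊗a2⊗a3) := a1·h(a2⊗a3) − h(a1a2⊗a3) + h(a1⊗a2a3) − h(a1⊗a2)·a3 takes values in the biannihilator Anni(K), i.e., f(a1⊗a2⊗a3)·k = 0 and k·f(a1⊗a2⊗a3) = 0 for all k ∈ K. -/
import Mathlib


/-- A bimultiplication of a (possibly non-unital) associative `F`-algebra `K`. -/
def IsBimul (F : Type*) {K : Type*} [Field F] [NonUnitalRing K] [Module F K]
    [SMulCommClass F K K] [IsScalarTower F K K] (u v : K →ₗ[F] K) : Prop :=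
  (∀ k1 k2 : K, k1 * u k2 = v k1 * k2) ∧
  (∀ k1 k2 : K, u (k1 * k2) = u k1 * k2) ∧
  (∀ k1 k2 : K, v (k1 * k2) = k1 * v k2)

/-- With `μ = (u,v)` a regular bimultiplication law (pairwise permutable images)
whose curvature is inner, produced by a hindrance `h` (`ε ∘ h = R^μ`), the
trilinear map
`f(a₁⊗a₂⊗a₃) = a₁·h(a₂⊗a₃) − h(a₁a₂⊗a₃) + h(a₁⊗a₂a₃) − h(a₁⊗a₂)·a₃`
takes values in the biannihilator: `f(a₁⊗a₂⊗a₃) * k = 0` and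
`k * f(a₁⊗a₂⊗a₃) = 0` for all `k ∈ K`. -/
theorem obstruction_cochain_valued_in_biannihilator
    (F A K : Type*) [Field F]
    [NonUnitalRing A] [Module F A] [SMulCommClass F A A] [IsScalarTower F A A]
    [NonUnitalRing K] [Module F K] [SMulCommClass F K K] [IsScalarTower F K K]
    (u v : A →ₗ[F] (K →ₗ[F] K))
    (hbim : ∀ a : A, IsBimul F (u a) (v a))
    (hreg : ∀ a1 a2 : A, u a1 ∘ₗ v a2 = v a2 ∘ₗ u a1)
    (h : A →ₗ[F] A →ₗ[F] K)
    (hcurv : ∀ a1 a2 : A,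
      u a1 ∘ₗ u a2 - u (a1 * a2) = LinearMap.mulLeft F (h a1 a2) ∧
      v a2 ∘ₗ v a1 - v (a1 * a2) = LinearMap.mulRight F (h a1 a2)) :
    ∀ (a1 a2 a3 : A) (k : K),
      (u a1 (h a2 a3) - h (a1 * a2) a3 + h a1 (a2 * a3) - v a3 (h a1 a2)) * k = 0 ∧
      k * (u a1 (h a2 a3) - h (a1 * a2) a3 + h a1 (a2 * a3) - v a3 (h a1 a2)) = 0 := by
  intro a1 a2 a3 k
  have HL : ∀ (a b : A) (x : K), h a b * x = u a (u b x) - u (a * b) x := by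
    intro a b x
    have := congrArg (fun g : K →ₗ[F] K => g x) (hcurv a b).1
    simpa using this.symm
  have HR : ∀ (a b : A) (x : K), x * h a b = v b (v a x) - v (a * b) x := by
    intro a b x
    have := congrArg (fun g : K →ₗ[F] K => g x) (hcurv a b).2
    simpa using this.symm
  constructor
  · have e1 : u a1 (h a2 a3) * k = u a1 (u a2 (u a3 k)) - u a1 (u (a2 * a3) k) := by
      rw [← (hbim a1).2.1, HL, map_sub]
    have e2 : h (a1 * a2) a3 * k = u (a1 * a2) (u a3 k) - u (a1 * a2 * a3) k := HL _ _ _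
    have e3 : h a1 (a2 * a3) * k = u a1 (u (a2 * a3) k) - u (a1 * (a2 * a3)) k := HL _ _ _
    have e4 : v a3 (h a1 a2) * k = u a1 (u a2 (u a3 k)) - u (a1 * a2) (u a3 k) := by
      rw [← (hbim a3).1, HL]
    rw [sub_mul, add_mul, sub_mul, e1, e2, e3, e4, mul_assoc]
    abel
  · have f1 : k * u a1 (h a2 a3) = v a3 (v a2 (v a1 k)) - v (a2 * a3) (v a1 k) := by
      rw [(hbim a1).1, HR]
    have f2 : k * h (a1 * a2) a3 = v a3 (v (a1 * a2) k) - v (a1 * a2 * a3) k := HR _ _ _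
    have f3 : k * h a1 (a2 * a3) = v (a2 * a3) (v a1 k) - v (a1 * (a2 * a3)) k := HR _ _ _
    have f4 : k * v a3 (h a1 a2) = v a3 (v a2 (v a1 k)) - v a3 (v (a1 * a2) k) := by
      rw [← (hbim a3).2.2, HR, map_sub]
    rw [mul_sub, mul_add, mul_sub, f1, f2, f3, f4, mul_assoc]
    abel
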